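/- Let H ∈ (0,1) and a > 0, let K_H be the Volterra kernel of the Mandelbrot–Van Ness fractional Brownian motion (extended by 0 for s ≥ t), and assume there is a constant M > 0 such that ∫_0^1 (K_H(t,u) − K_H(s,u))² du ≤ M |t−s|^{2H} for all s,t ∈ [0,1], and that ∫_0^1 ∫_0^1 K_H(v,u)² du dv < ∞. For ε ∈ (0,1] define K^ε(t,s) = ε^H K_H(t,s) − a ε^{H+1} ∫_s^t e^{−aε(t−u)} K_H(u,s) du for 0 < s < t ≤ 1 (and 0 for s ≥ t). Then there exists a constant C > 0 such that for every ε ∈ (0,1] and all s,t ∈ [0,1], ∫_0^1 (K^ε(t,u) − K^ε(s,u))² du ≤ C ε^{2H} |t−s|^{min(2H,1)}. -/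

import Mathlib

open Real Filter Set MeasureTheory

/-- Normalizing constant of the Mandelbrot–Van Ness Volterra kernel. -/
noncomputable def cH (H : ℝ) : ℝ :=
  Real.sqrt (2 * H * Real.Gamma (3 / 2 - H) / (Real.Gamma (H + 1 / 2) * Real.Gamma (2 - 2 * H)))

/-- The Volterra kernel of the Mandelbrot–Van Ness fractional Brownian motion,
extended by `0` for `s ≥ t`. -/
noncomputable def KH (H t s : ℝ) : ℝ :=
  if s < t then
    cH H * ((t / s) ^ (H - 1 / 2) * (t - s) ^ (H - 1 / 2)
      - (H - 1 / 2) * s ^ (1 / 2 - H) * ∫ u in s..t, u ^ (H - 3 / 2) * (u - s) ^ (H - 1 / 2))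
  else 0

/-- The short-time rescaled kernel of the fractional Ornstein–Uhlenbeck process,
extended by `0` for `s ≥ t`. -/
noncomputable def KepsFOU (H a ε t s : ℝ) : ℝ :=
  if s < t then
    ε ^ H * KH H t s - a * ε ^ (H + 1) * ∫ u in s..t, Real.exp (-(a * ε * (t - u))) * KH H u s
  else 0

set_option maxHeartbeats 1000000


lemma norm_le_sq_add_one (y : ℝ) : ‖y‖ ≤ y ^ 2 + 1 := by
  rw [Real.norm_eq_abs]
  nlinarith [sq_nonneg (|y| - 1), sq_abs y, abs_nonneg y]

lemma sq_exp_diff {x y : ℝ} (hx : 0 ≤ x) (hy : 0 ≤ y) :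
    (Real.exp (-x) - Real.exp (-y)) ^ 2 ≤ (x - y) ^ 2 := by
  have key : ∀ z w : ℝ, 0 ≤ z → 0 ≤ w → z ≤ w →
      (Real.exp (-z) - Real.exp (-w)) ^ 2 ≤ (z - w) ^ 2 := by
    intro z w hz hw hzw
    have h1 : Real.exp (-w) ≤ Real.exp (-z) := Real.exp_le_exp.2 (by linarith)
    have h2 : Real.exp (-z) ≤ 1 := Real.exp_le_one_iff.2 (by linarith)
    have h3 : (z - w) + 1 ≤ Real.exp (z - w) := Real.add_one_le_exp _
    have h4 : Real.exp (-z) * Real.exp (z - w) = Real.exp (-w) := by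
      rw [← Real.exp_add]; ring_nf
    have h5 : 0 < Real.exp (-z) := Real.exp_pos _
    have h7 : Real.exp (z - w) ≤ 1 := Real.exp_le_one_iff.2 (by linarith)
    have h6 : Real.exp (-z) - Real.exp (-w) ≤ w - z := by nlinarith
    nlinarith
  rcases le_total x y with h | h
  · exact key x y hx hy h
  · have := key y x hy hx h
    nlinarith

lemma sq_setIntegral_le {c d : ℝ} (hcd : c ≤ d) {φ : ℝ → ℝ}
    (hm : AEStronglyMeasurable φ (volume.restrict (Set.Ioc c d)))
    (h2 : IntegrableOn (fun x => φ x ^ 2) (Set.Ioc c d)) :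
    (∫ x in Set.Ioc c d, φ x) ^ 2 ≤ (d - c) * ∫ x in Set.Ioc c d, φ x ^ 2 := by
  rcases eq_or_lt_of_le hcd with rfl | hlt
  · simp
  have hfin : IsFiniteMeasure (volume.restrict (Set.Ioc c d)) := by
    constructor
    rw [Measure.restrict_apply_univ, Real.volume_Ioc]
    exact ENNReal.ofReal_lt_top
  have hφ : Integrable φ (volume.restrict (Set.Ioc c d)) := by
    refine Integrable.mono' (h2.add (integrable_const 1)) hm (ae_of_all _ fun x => ?_)
    exact norm_le_sq_add_one _
  set A := ∫ x in Set.Ioc c d, φ x with hA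
  set B := ∫ x in Set.Ioc c d, φ x ^ 2 with hB
  have hmeasuniv : ((volume.restrict (Set.Ioc c d)) Set.univ).toReal = d - c := by
    rw [Measure.restrict_apply_univ, Real.volume_Ioc, ENNReal.toReal_ofReal (by linarith)]
  have hkey : 0 ≤ ∫ x in Set.Ioc c d, ((d - c) * φ x - A) ^ 2 :=
    integral_nonneg fun x => sq_nonneg _
  have hexp : ∫ x in Set.Ioc c d, ((d - c) * φ x - A) ^ 2
      = (d - c) ^ 2 * B - (2 * (d - c) * A) * A + A ^ 2 * (d - c) := by
    have heq : (fun x => ((d - c) * φ x - A) ^ 2)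
        = fun x => ((d - c) ^ 2 * φ x ^ 2 - (2 * (d - c) * A) * φ x) + A ^ 2 := by
      funext x; ring
    have i1 : Integrable (fun x => (d - c) ^ 2 * φ x ^ 2) (volume.restrict (Set.Ioc c d)) :=
      h2.const_mul _
    have i2 : Integrable (fun x => (2 * (d - c) * A) * φ x) (volume.restrict (Set.Ioc c d)) :=
      hφ.const_mul _
    have i12 : Integrable (fun x => (d - c) ^ 2 * φ x ^ 2 - (2 * (d - c) * A) * φ x)
        (volume.restrict (Set.Ioc c d)) := i1.sub i2
    rw [heq, integral_add i12 (integrable_const _), integral_sub i1 i2, integral_const_mul,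
      integral_const_mul, integral_const, smul_eq_mul, measureReal_def, hmeasuniv, ← hA, ← hB]
    ring
  rw [hexp] at hkey
  nlinarith

lemma KH_measurable (H : ℝ) : Measurable fun p : ℝ × ℝ => KH H p.1 p.2 := by
  have hψ : Measurable fun q : (ℝ × ℝ) × ℝ =>
      q.2 ^ (H - 3 / 2) * (q.2 - q.1.2) ^ (H - 1 / 2) :=
    (measurable_snd.pow_const _).mul ((measurable_snd.sub measurable_fst.snd).pow_const _)
  have hIoc1 : Measurable fun p : ℝ × ℝ =>
      ∫ u in Set.Ioc p.2 p.1, u ^ (H - 3 / 2) * (u - p.2) ^ (H - 1 / 2) := by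
    have hker : Measurable fun q : (ℝ × ℝ) × ℝ =>
        (Set.Ioc q.1.2 q.1.1).indicator (fun u : ℝ => u ^ (H - 3 / 2) * (u - q.1.2) ^ (H - 1 / 2)) q.2 := by
      simp only [Set.indicator_apply]
      exact Measurable.ite
        ((measurableSet_lt measurable_fst.snd measurable_snd).inter
          (measurableSet_le measurable_snd measurable_fst.fst)) hψ measurable_const
    have h1 := (hker.stronglyMeasurable.integral_prod_right' (ν := volume)).measurable
    have h2 : (fun p : ℝ × ℝ => ∫ u in Set.Ioc p.2 p.1, u ^ (H - 3 / 2) * (u - p.2) ^ (H - 1 / 2))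
        = fun p : ℝ × ℝ => ∫ u, (Set.Ioc p.2 p.1).indicator
            (fun u : ℝ => u ^ (H - 3 / 2) * (u - p.2) ^ (H - 1 / 2)) u := by
      funext p
      rw [integral_indicator measurableSet_Ioc]
    rw [h2]; exact h1
  have hIoc2 : Measurable fun p : ℝ × ℝ =>
      ∫ u in Set.Ioc p.1 p.2, u ^ (H - 3 / 2) * (u - p.2) ^ (H - 1 / 2) := by
    have hker : Measurable fun q : (ℝ × ℝ) × ℝ =>
        (Set.Ioc q.1.1 q.1.2).indicator (fun u : ℝ => u ^ (H - 3 / 2) * (u - q.1.2) ^ (H - 1 / 2)) q.2 := by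
      simp only [Set.indicator_apply]
      exact Measurable.ite
        ((measurableSet_lt measurable_fst.fst measurable_snd).inter
          (measurableSet_le measurable_snd measurable_fst.snd)) hψ measurable_const
    have h1 := (hker.stronglyMeasurable.integral_prod_right' (ν := volume)).measurable
    have h2 : (fun p : ℝ × ℝ => ∫ u in Set.Ioc p.1 p.2, u ^ (H - 3 / 2) * (u - p.2) ^ (H - 1 / 2))
        = fun p : ℝ × ℝ => ∫ u, (Set.Ioc p.1 p.2).indicator
            (fun u : ℝ => u ^ (H - 3 / 2) * (u - p.2) ^ (H - 1 / 2)) u := by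
      funext p
      rw [integral_indicator measurableSet_Ioc]
    rw [h2]; exact h1
  have hJ : Measurable fun p : ℝ × ℝ =>
      ∫ u in p.2..p.1, u ^ (H - 3 / 2) * (u - p.2) ^ (H - 1 / 2) := hIoc1.sub hIoc2
  unfold KH
  refine Measurable.ite (measurableSet_lt measurable_snd measurable_fst) ?_ measurable_const
  refine Measurable.const_mul (Measurable.sub ?_ ?_) (cH H)
  · exact ((measurable_fst.div measurable_snd).pow_const _).mul
      ((measurable_fst.sub measurable_snd).pow_const _)
  · exact (((measurable_snd.pow_const _).const_mul (H - 1 / 2)).mul hJ)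

/-- Generic Cauchy–Schwarz-type bound for weighted integrals of `K`. -/
lemma sq_wK_le {c d : ℝ} (hc : 0 ≤ c) (hcd : c ≤ d) (hd : d ≤ 1)
    {w K : ℝ → ℝ} (hw : Measurable w) (hK : Measurable K)
    (hKint : IntegrableOn (fun v => K v ^ 2) (Set.Icc 0 1)) {b : ℝ}
    (hb : ∀ v ∈ Set.Ioc c d, w v ^ 2 ≤ b ^ 2) :
    (∫ v in Set.Ioc c d, w v * K v) ^ 2
      ≤ (d - c) * (b ^ 2 * ∫ v in Set.Icc (0:ℝ) 1, K v ^ 2) := by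
  have hsub : Set.Ioc c d ⊆ Set.Icc (0:ℝ) 1 := fun x hx => ⟨le_trans hc hx.1.le, le_trans hx.2 hd⟩
  have hKsub : IntegrableOn (fun v => K v ^ 2) (Set.Ioc c d) := hKint.mono_set hsub
  have h2 : IntegrableOn (fun v => (w v * K v) ^ 2) (Set.Ioc c d) := by
    refine Integrable.mono' (hKsub.const_mul (b ^ 2)) ((hw.mul hK).pow_const 2).aestronglyMeasurable ?_
    filter_upwards [ae_restrict_mem measurableSet_Ioc] with v hv
    rw [Real.norm_eq_abs, abs_of_nonneg (sq_nonneg _)]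
    have := hb v hv
    nlinarith [sq_nonneg (K v), sq_nonneg (w v)]
  have hCS := sq_setIntegral_le hcd (hw.mul hK).aestronglyMeasurable h2
  have hmono : ∫ v in Set.Ioc c d, (w v * K v) ^ 2 ≤ b ^ 2 * ∫ v in Set.Icc (0:ℝ) 1, K v ^ 2 := by
    calc ∫ v in Set.Ioc c d, (w v * K v) ^ 2
        ≤ ∫ v in Set.Ioc c d, b ^ 2 * K v ^ 2 := by
          refine setIntegral_mono_on h2 (hKsub.const_mul _) measurableSet_Ioc fun v hv => ?_
          have := hb v hv
          nlinarith [sq_nonneg (K v), sq_nonneg (w v)]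
      _ = b ^ 2 * ∫ v in Set.Ioc c d, K v ^ 2 := integral_const_mul _ _
      _ ≤ b ^ 2 * ∫ v in Set.Icc (0:ℝ) 1, K v ^ 2 := by
          refine mul_le_mul_of_nonneg_left ?_ (sq_nonneg b)
          refine setIntegral_mono_set hKint (ae_of_all _ fun v => sq_nonneg _) ?_
          exact HasSubset.Subset.eventuallyLE hsub
  calc (∫ v in Set.Ioc c d, w v * K v) ^ 2
      ≤ (d - c) * ∫ v in Set.Ioc c d, (w v * K v) ^ 2 := hCS
    _ ≤ (d - c) * (b ^ 2 * ∫ v in Set.Icc (0:ℝ) 1, K v ^ 2) :=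
        mul_le_mul_of_nonneg_left hmono (by linarith)

lemma wK_integrable {c d : ℝ} (hc : 0 ≤ c) (hd : d ≤ 1)
    {w K : ℝ → ℝ} (hw : Measurable w) (hK : Measurable K)
    (hKint : IntegrableOn (fun v => K v ^ 2) (Set.Icc 0 1)) {b : ℝ}
    (hb : ∀ v ∈ Set.Ioc c d, |w v| ≤ b) :
    IntegrableOn (fun v => w v * K v) (Set.Ioc c d) := by
  have hsub : Set.Ioc c d ⊆ Set.Icc (0:ℝ) 1 := fun x hx => ⟨le_trans hc hx.1.le, le_trans hx.2 hd⟩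
  have hK1 : IntegrableOn K (Set.Icc 0 1) := by
    refine Integrable.mono' (hKint.add (integrable_const 1)) hK.aestronglyMeasurable
      (ae_of_all _ fun v => norm_le_sq_add_one _)
  refine Integrable.mono' (((hK1.mono_set hsub).abs).const_mul b)
    (hw.mul hK).aestronglyMeasurable ?_
  filter_upwards [ae_restrict_mem measurableSet_Ioc] with v hv
  rw [Real.norm_eq_abs, abs_mul]
  exact mul_le_mul_of_nonneg_right (hb v hv) (abs_nonneg _)

lemma decomp (H a ε s t u : ℝ) (ha : 0 < a) (hε : ε ∈ Set.Ioc (0:ℝ) 1)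
    (hs0 : 0 ≤ s) (hst : s < t) (ht1 : t ≤ 1) (hu : u ∈ Set.Ioc (0:ℝ) 1)
    (hKHm : Measurable fun p : ℝ × ℝ => KH H p.1 p.2)
    (hint : IntegrableOn (fun v => KH H v u ^ 2) (Set.Icc 0 1)) :
    ∃ D : ℝ, KepsFOU H a ε t u - KepsFOU H a ε s u
        = ε ^ H * (KH H t u - KH H s u) - a * ε ^ (H + 1) * D
      ∧ D ^ 2 ≤ 2 * (1 + a ^ 2) * (t - s) * ∫ v in Set.Icc (0:ℝ) 1, KH H v u ^ 2 := by
  obtain ⟨hu0, hu1⟩ := hu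
  set Fu := ∫ v in Set.Icc (0:ℝ) 1, KH H v u ^ 2 with hFudef
  have hFu : 0 ≤ Fu := setIntegral_nonneg measurableSet_Icc fun v _ => sq_nonneg _
  have hKm : Measurable fun v => KH H v u := hKHm.comp (measurable_id.prodMk measurable_const)
  have hts1 : t - s ≤ 1 := by linarith
  have hts0 : 0 ≤ t - s := by linarith
  by_cases hut : u < t
  · -- main case
    set It := ∫ v in u..t, Real.exp (-(a * ε * (t - v))) * KH H v u with hItdef
    set Is := ∫ v in u..s, Real.exp (-(a * ε * (s - v))) * KH H v u with hIsdef
    have hKt : KepsFOU H a ε t u = ε ^ H * KH H t u - a * ε ^ (H + 1) * It := by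
      rw [KepsFOU, if_pos hut]
    have hIs0 : s ≤ u → Is = 0 := by
      intro hsu
      rw [hIsdef, intervalIntegral.integral_symm]
      have : ∫ v in s..u, Real.exp (-(a * ε * (s - v))) * KH H v u = 0 := by
        rw [intervalIntegral.integral_congr (g := fun _ => (0:ℝ)) ?_, intervalIntegral.integral_zero]
        intro v hv
        rw [Set.uIcc_of_le hsu] at hv
        have : KH H v u = 0 := by rw [KH, if_neg (not_lt.2 hv.2)]
        simp [this]
      rw [this, neg_zero]
    have hident : KepsFOU H a ε t u - KepsFOU H a ε s u
        = ε ^ H * (KH H t u - KH H s u) - a * ε ^ (H + 1) * (It - Is) := by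
      by_cases hus : u < s
      · have hKs : KepsFOU H a ε s u = ε ^ H * KH H s u - a * ε ^ (H + 1) * Is := by
          rw [KepsFOU, if_pos hus]
        rw [hKt, hKs]; ring
      · have hKs : KepsFOU H a ε s u = 0 := by rw [KepsFOU, if_neg hus]
        have hKHs : KH H s u = 0 := by rw [KH, if_neg hus]
        rw [hKt, hKs, hKHs, hIs0 (not_lt.1 hus)]; ring
    refine ⟨It - Is, hident, ?_⟩
    -- bound (It - Is)²
    have haε : 0 ≤ a * ε := mul_nonneg ha.le hε.1.le
    have hwt : ∀ r : ℝ, Measurable fun v => Real.exp (-(a * ε * (r - v))) := fun r =>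
      (((measurable_const.sub measurable_id).const_mul (a * ε)).neg).exp
    have hexp1 : ∀ r v : ℝ, v ≤ r → Real.exp (-(a * ε * (r - v))) ^ 2 ≤ 1 ^ 2 := by
      intro r v hvr
      have h1 : Real.exp (-(a * ε * (r - v))) ≤ 1 :=
        Real.exp_le_one_iff.2 (neg_nonpos.2 (mul_nonneg haε (by linarith)))
      have h2 : 0 < Real.exp (-(a * ε * (r - v))) := Real.exp_pos _
      nlinarith
    have hs1 : s ≤ 1 := by linarith
    by_cases hsu : s ≤ u
    · rw [hIs0 hsu, sub_zero, hItdef, intervalIntegral.integral_of_le hut.le]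
      have hsq := sq_wK_le hu0.le hut.le ht1 (hwt t) hKm hint
        (b := 1) (fun v hv => hexp1 t v hv.2)
      calc (∫ v in Set.Ioc u t, Real.exp (-(a * ε * (t - v))) * KH H v u) ^ 2
          ≤ (t - u) * (1 ^ 2 * Fu) := hsq
        _ ≤ 2 * (1 + a ^ 2) * (t - s) * Fu := by nlinarith [sq_nonneg a, mul_nonneg hts0 hFu]
    · push_neg at hsu
      have he_t_us : IntegrableOn (fun v => Real.exp (-(a * ε * (t - v))) * KH H v u)
          (Set.Ioc u s) := wK_integrable hu0.le hs1 (hwt t) hKm hint (b := 1)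
          (fun v hv => by
            rw [abs_of_pos (Real.exp_pos _)]
            exact Real.exp_le_one_iff.2 (neg_nonpos.2 (mul_nonneg haε (by nlinarith [hv.2]))))
      have he_t_st : IntegrableOn (fun v => Real.exp (-(a * ε * (t - v))) * KH H v u)
          (Set.Ioc s t) := wK_integrable hs0 ht1 (hwt t) hKm hint (b := 1)
          (fun v hv => by
            rw [abs_of_pos (Real.exp_pos _)]
            exact Real.exp_le_one_iff.2 (neg_nonpos.2 (mul_nonneg haε (by nlinarith [hv.2]))))
      have he_s_us : IntegrableOn (fun v => Real.exp (-(a * ε * (s - v))) * KH H v u)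
          (Set.Ioc u s) := wK_integrable hu0.le hs1 (hwt s) hKm hint (b := 1)
          (fun v hv => by
            rw [abs_of_pos (Real.exp_pos _)]
            exact Real.exp_le_one_iff.2 (neg_nonpos.2 (mul_nonneg haε (by nlinarith [hv.2]))))
      have hIt_split : It = (∫ v in Set.Ioc u s, Real.exp (-(a * ε * (t - v))) * KH H v u)
          + ∫ v in Set.Ioc s t, Real.exp (-(a * ε * (t - v))) * KH H v u := by
        rw [hItdef, intervalIntegral.integral_of_le hut.le,
          ← Set.Ioc_union_Ioc_eq_Ioc hsu.le hst.le,
          setIntegral_union (Set.Ioc_disjoint_Ioc_of_le le_rfl) measurableSet_Ioc he_t_us he_t_st]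
      have hIs_eq : Is = ∫ v in Set.Ioc u s, Real.exp (-(a * ε * (s - v))) * KH H v u := by
        rw [hIsdef, intervalIntegral.integral_of_le hsu.le]
      set T1 := ∫ v in Set.Ioc s t, Real.exp (-(a * ε * (t - v))) * KH H v u with hT1def
      set T2 := ∫ v in Set.Ioc u s,
        (Real.exp (-(a * ε * (t - v))) - Real.exp (-(a * ε * (s - v)))) * KH H v u with hT2def
      have hdiff : It - Is = T1 + T2 := by
        rw [hIt_split, hIs_eq, hT2def]
        rw [show (fun v => (Real.exp (-(a * ε * (t - v))) - Real.exp (-(a * ε * (s - v))))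
            * KH H v u) = fun v => Real.exp (-(a * ε * (t - v))) * KH H v u
              - Real.exp (-(a * ε * (s - v))) * KH H v u from funext fun v => by ring,
          integral_sub he_t_us he_s_us]
        ring
      have hT1sq : T1 ^ 2 ≤ (t - s) * (1 ^ 2 * Fu) :=
        sq_wK_le hs0 hst.le ht1 (hwt t) hKm hint (b := 1) (fun v hv => hexp1 t v hv.2)
      have hT2sq : T2 ^ 2 ≤ (s - u) * ((a * ε * (t - s)) ^ 2 * Fu) := by
        refine sq_wK_le hu0.le hsu.le hs1 ((hwt t).sub (hwt s)) hKm hint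
          (b := a * ε * (t - s)) (fun v hv => ?_)
        have hx : 0 ≤ a * ε * (t - v) := mul_nonneg haε (by nlinarith [hv.2])
        have hy : 0 ≤ a * ε * (s - v) := mul_nonneg haε (by nlinarith [hv.2])
        have := sq_exp_diff hx hy
        calc (Real.exp (-(a * ε * (t - v))) - Real.exp (-(a * ε * (s - v)))) ^ 2
            ≤ (a * ε * (t - v) - a * ε * (s - v)) ^ 2 := this
          _ = (a * ε * (t - s)) ^ 2 := by ring
      have hsu1 : s - u ≤ 1 := by linarith
      have hsu0 : 0 ≤ s - u := by linarith
      have hscal : (s - u) * ((a * ε * (t - s)) ^ 2 * Fu) ≤ a ^ 2 * ((t - s) * Fu) := by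
        have he2 : ε ^ 2 ≤ 1 := by nlinarith [hε.1.le, hε.2]
        have ht2 : (t - s) ^ 2 ≤ t - s := by nlinarith
        have key : (s - u) * (a * ε * (t - s)) ^ 2 ≤ a ^ 2 * (t - s) := by
          have e1 : (s - u) * (a * ε * (t - s)) ^ 2 = a ^ 2 * ((s - u) * (ε ^ 2 * (t - s) ^ 2)) := by
            ring
          rw [e1]
          refine mul_le_mul_of_nonneg_left ?_ (sq_nonneg a)
          have h1 : ε ^ 2 * (t - s) ^ 2 ≤ t - s := by nlinarith [sq_nonneg (t - s), sq_nonneg ε]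
          nlinarith [mul_nonneg (sq_nonneg ε) (sq_nonneg (t - s))]
        calc (s - u) * ((a * ε * (t - s)) ^ 2 * Fu) = ((s - u) * (a * ε * (t - s)) ^ 2) * Fu := by
              ring
          _ ≤ (a ^ 2 * (t - s)) * Fu := mul_le_mul_of_nonneg_right key hFu
          _ = a ^ 2 * ((t - s) * Fu) := by ring
      rw [hdiff]
      nlinarith [sq_nonneg (T1 - T2), hT1sq, hT2sq, hscal, mul_nonneg hts0 hFu]
  · -- u ≥ t
    have h1 : KepsFOU H a ε t u = 0 := by rw [KepsFOU, if_neg hut]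
    have h2 : KepsFOU H a ε s u = 0 := by rw [KepsFOU, if_neg (fun h => hut (h.trans hst))]
    have h3 : KH H t u = 0 := by rw [KH, if_neg hut]
    have h4 : KH H s u = 0 := by rw [KH, if_neg (fun h => hut (h.trans hst))]
    refine ⟨0, by rw [h1, h2, h3, h4]; ring, ?_⟩
    have : 0 ≤ 2 * (1 + a ^ 2) * (t - s) * Fu :=
      mul_nonneg (mul_nonneg (by positivity) hts0) hFu
    simpa using this

/-- Condition (K2) for fOU-driven volatility: assuming the Hölder-type `L²`
increment bound for `K_H` and square integrability of `K_H` on `[0,1]²`, the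
rescaled fOU kernels satisfy a uniform Hölder-type `L²` increment bound at the
small-noise scale `ε^H` with exponent `min(2H,1)`. -/
theorem stmt_9 (H a : ℝ) (hH : H ∈ Set.Ioo (0:ℝ) 1) (ha : 0 < a)
    (M : ℝ) (hM : 0 < M)
    (hHolder : ∀ s ∈ Set.Icc (0:ℝ) 1, ∀ t ∈ Set.Icc (0:ℝ) 1,
      (∫ u in (0:ℝ)..1, (KH H t u - KH H s u) ^ 2) ≤ M * |t - s| ^ (2 * H))
    (hL2 : IntegrableOn (fun vu : ℝ × ℝ => (KH H vu.1 vu.2) ^ 2)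
      (Set.Icc 0 1 ×ˢ Set.Icc 0 1) (volume.prod volume)) :
    ∃ C > 0, ∀ ε ∈ Set.Ioc (0:ℝ) 1, ∀ s ∈ Set.Icc (0:ℝ) 1, ∀ t ∈ Set.Icc (0:ℝ) 1,
      (∫ u in (0:ℝ)..1, (KepsFOU H a ε t u - KepsFOU H a ε s u) ^ 2)
        ≤ C * ε ^ (2 * H) * |t - s| ^ (min (2 * H) 1) := by
  have hKHm := KH_measurable H
  have hIcc : MeasurableSet (Set.Icc (0:ℝ) 1) := measurableSet_Icc
  rw [IntegrableOn, ← Measure.prod_restrict] at hL2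
  have hswap : Integrable (fun q : ℝ × ℝ => KH H q.2 q.1 ^ 2)
      ((volume.restrict (Set.Icc (0:ℝ) 1)).prod (volume.restrict (Set.Icc (0:ℝ) 1))) := by
    have := hL2.swap
    simpa [Function.comp_def] using this
  set F : ℝ → ℝ := fun u => ∫ v in Set.Icc (0:ℝ) 1, KH H v u ^ 2 with hFdef
  have hFint : IntegrableOn F (Set.Icc 0 1) := by
    have := hswap.integral_prod_left
    exact this
  have hsect : ∀ᵐ u ∂(volume.restrict (Set.Icc (0:ℝ) 1)),
      IntegrableOn (fun v => KH H v u ^ 2) (Set.Icc (0:ℝ) 1) := hswap.prod_right_ae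
  have hFnn : ∀ u, 0 ≤ F u := fun u => setIntegral_nonneg hIcc fun v _ => sq_nonneg _
  set L : ℝ := ∫ u in Set.Icc (0:ℝ) 1, F u with hLdef
  have hL0 : 0 ≤ L := setIntegral_nonneg hIcc fun u _ => hFnn u
  have hC : 0 < 2 * M + 4 * a ^ 2 * (1 + a ^ 2) * (L + 1) := by
    have h1 : 0 ≤ 4 * a ^ 2 * (1 + a ^ 2) * (L + 1) :=
      mul_nonneg (by positivity) (by linarith)
    linarith
  refine ⟨2 * M + 4 * a ^ 2 * (1 + a ^ 2) * (L + 1), hC, ?_⟩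
  have key : ∀ ε ∈ Set.Ioc (0:ℝ) 1, ∀ s ∈ Set.Icc (0:ℝ) 1, ∀ t ∈ Set.Icc (0:ℝ) 1, s ≤ t →
      (∫ u in (0:ℝ)..1, (KepsFOU H a ε t u - KepsFOU H a ε s u) ^ 2)
        ≤ (2 * M + 4 * a ^ 2 * (1 + a ^ 2) * (L + 1)) * ε ^ (2 * H)
          * |t - s| ^ (min (2 * H) 1) := by
    intro ε hε s hs t ht hst
    have hRHS0 : 0 ≤ (2 * M + 4 * a ^ 2 * (1 + a ^ 2) * (L + 1)) * ε ^ (2 * H)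
        * |t - s| ^ (min (2 * H) 1) :=
      mul_nonneg (mul_nonneg hC.le (Real.rpow_nonneg hε.1.le _))
        (Real.rpow_nonneg (abs_nonneg _) _)
    rcases hst.eq_or_lt with rfl | hlt
    · simpa using hRHS0
    have hs0 : 0 ≤ s := hs.1
    have ht1 : t ≤ 1 := ht.2
    have hts0 : 0 < t - s := by linarith
    have hts1 : t - s ≤ 1 := by linarith [hs.1, ht.2]
    rw [intervalIntegral.integral_of_le zero_le_one, abs_of_pos hts0]
    set m := min (2 * H) 1 with hmdef
    have hm1 : m ≤ 1 := min_le_right _ _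
    have hm2H : m ≤ 2 * H := min_le_left _ _
    rw [abs_of_pos hts0] at hRHS0
    by_cases hfint : IntegrableOn
        (fun u => (KepsFOU H a ε t u - KepsFOU H a ε s u) ^ 2) (Set.Ioc 0 1)
    swap
    · rw [integral_undef hfint]; exact hRHS0
    have hsect' : ∀ᵐ u ∂(volume.restrict (Set.Ioc (0:ℝ) 1)),
        IntegrableOn (fun v => KH H v u ^ 2) (Set.Icc (0:ℝ) 1) :=
      hsect.filter_mono (ae_mono (Measure.restrict_mono Set.Ioc_subset_Icc_self le_rfl))
    have hdec : ∀ᵐ u ∂(volume.restrict (Set.Ioc (0:ℝ) 1)),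
        ∃ D : ℝ, KepsFOU H a ε t u - KepsFOU H a ε s u
            = ε ^ H * (KH H t u - KH H s u) - a * ε ^ (H + 1) * D
          ∧ D ^ 2 ≤ 2 * (1 + a ^ 2) * (t - s) * F u := by
      filter_upwards [hsect', ae_restrict_mem measurableSet_Ioc] with u h1 h2
      exact decomp H a ε s t u ha hε hs0 hlt ht1 h2 hKHm h1
    have hPm : Measurable fun u => (KH H t u - KH H s u) ^ 2 :=
      (((hKHm.comp (measurable_const.prodMk measurable_id)).sub
        (hKHm.comp (measurable_const.prodMk measurable_id))).pow_const 2)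
    have hεH : (0:ℝ) < ε ^ H := Real.rpow_pos_of_pos hε.1 _
    have hFIoc : IntegrableOn F (Set.Ioc 0 1) := hFint.mono_set Set.Ioc_subset_Icc_self
    have hPint : IntegrableOn (fun u => (KH H t u - KH H s u) ^ 2) (Set.Ioc 0 1) := by
      have hGint : Integrable (fun u => ((ε ^ H) ^ 2)⁻¹
          * (2 * (KepsFOU H a ε t u - KepsFOU H a ε s u) ^ 2
            + (4 * (a * ε ^ (H + 1)) ^ 2 * (1 + a ^ 2) * (t - s)) * F u))
          (volume.restrict (Set.Ioc 0 1)) :=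
        (((hfint.const_mul 2).add (hFIoc.const_mul _)).const_mul _)
      refine Integrable.mono' hGint hPm.aestronglyMeasurable ?_
      filter_upwards [hdec] with u hu
      obtain ⟨D, hDeq, hDle⟩ := hu
      rw [Real.norm_eq_abs, abs_of_nonneg (sq_nonneg _), inv_mul_eq_div,
        le_div_iff₀ (by positivity)]
      have hX : (ε ^ H * (KH H t u - KH H s u)) ^ 2
          ≤ 2 * (KepsFOU H a ε t u - KepsFOU H a ε s u) ^ 2 + 2 * (a * ε ^ (H + 1) * D) ^ 2 := by
        have hXeq : (ε ^ H * (KH H t u - KH H s u)) ^ 2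
            = ((KepsFOU H a ε t u - KepsFOU H a ε s u) + a * ε ^ (H + 1) * D) ^ 2 := by
          rw [hDeq]; ring
        rw [hXeq]
        nlinarith [sq_nonneg ((KepsFOU H a ε t u - KepsFOU H a ε s u) - a * ε ^ (H + 1) * D)]
      have hY : (a * ε ^ (H + 1) * D) ^ 2
          ≤ (a * ε ^ (H + 1)) ^ 2 * (2 * (1 + a ^ 2) * (t - s) * F u) := by
        have h := mul_le_mul_of_nonneg_left hDle (sq_nonneg (a * ε ^ (H + 1)))
        nlinarith [h]
      nlinarith [hX, hY]
    have hgint : Integrable (fun u => 2 * (ε ^ H) ^ 2 * (KH H t u - KH H s u) ^ 2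
        + (4 * (a * ε ^ (H + 1)) ^ 2 * (1 + a ^ 2) * (t - s)) * F u)
        (volume.restrict (Set.Ioc 0 1)) := (hPint.const_mul _).add (hFIoc.const_mul _)
    have hmono : (∫ u in Set.Ioc (0:ℝ) 1, (KepsFOU H a ε t u - KepsFOU H a ε s u) ^ 2)
        ≤ ∫ u in Set.Ioc (0:ℝ) 1, (2 * (ε ^ H) ^ 2 * (KH H t u - KH H s u) ^ 2
          + (4 * (a * ε ^ (H + 1)) ^ 2 * (1 + a ^ 2) * (t - s)) * F u) := by
      refine integral_mono_of_nonneg (ae_of_all _ fun u => sq_nonneg _) hgint ?_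
      filter_upwards [hdec] with u hu
      obtain ⟨D, hDeq, hDle⟩ := hu
      have h := mul_le_mul_of_nonneg_left hDle (sq_nonneg (a * ε ^ (H + 1)))
      calc (KepsFOU H a ε t u - KepsFOU H a ε s u) ^ 2
          = (ε ^ H * (KH H t u - KH H s u) - a * ε ^ (H + 1) * D) ^ 2 := by rw [hDeq]
        _ ≤ 2 * (ε ^ H * (KH H t u - KH H s u)) ^ 2 + 2 * (a * ε ^ (H + 1) * D) ^ 2 := by
            nlinarith [sq_nonneg (ε ^ H * (KH H t u - KH H s u) + a * ε ^ (H + 1) * D)]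
        _ ≤ 2 * (ε ^ H) ^ 2 * (KH H t u - KH H s u) ^ 2
            + (4 * (a * ε ^ (H + 1)) ^ 2 * (1 + a ^ 2) * (t - s)) * F u := by nlinarith [h]
    have hsplit : (∫ u in Set.Ioc (0:ℝ) 1, (2 * (ε ^ H) ^ 2 * (KH H t u - KH H s u) ^ 2
          + (4 * (a * ε ^ (H + 1)) ^ 2 * (1 + a ^ 2) * (t - s)) * F u))
        = 2 * (ε ^ H) ^ 2 * (∫ u in Set.Ioc (0:ℝ) 1, (KH H t u - KH H s u) ^ 2)
          + (4 * (a * ε ^ (H + 1)) ^ 2 * (1 + a ^ 2) * (t - s))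
            * ∫ u in Set.Ioc (0:ℝ) 1, F u := by
      rw [integral_add (hPint.const_mul _) (hFIoc.const_mul _), integral_const_mul,
        integral_const_mul]
    have hIP : (∫ u in Set.Ioc (0:ℝ) 1, (KH H t u - KH H s u) ^ 2) ≤ M * (t - s) ^ (2 * H) := by
      have h := hHolder s hs t ht
      rwa [intervalIntegral.integral_of_le zero_le_one, abs_of_pos hts0] at h
    have hIF : (∫ u in Set.Ioc (0:ℝ) 1, F u) = L := by
      rw [hLdef]
      exact setIntegral_congr_set Ioc_ae_eq_Icc
    -- final arithmetic
    have e1 : (ε ^ H) ^ 2 = ε ^ (2 * H) := by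
      rw [← Real.rpow_natCast (ε ^ H) 2, ← Real.rpow_mul hε.1.le]
      norm_num [mul_comm]
    have e2 : (ε ^ (H + 1)) ^ 2 = ε ^ (2 * H + 2) := by
      rw [← Real.rpow_natCast (ε ^ (H + 1)) 2, ← Real.rpow_mul hε.1.le]
      ring_nf
    have i1 : ε ^ (2 * H + 2) ≤ ε ^ (2 * H) :=
      Real.rpow_le_rpow_of_exponent_ge hε.1 hε.2 (by linarith)
    have i2 : (t - s) ^ (2 * H) ≤ (t - s) ^ m :=
      Real.rpow_le_rpow_of_exponent_ge hts0 hts1 hm2H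
    have i3 : t - s ≤ (t - s) ^ m := by
      nth_rewrite 1 [← Real.rpow_one (t - s)]
      exact Real.rpow_le_rpow_of_exponent_ge hts0 hts1 hm1
    have hε2H : (0:ℝ) < ε ^ (2 * H) := Real.rpow_pos_of_pos hε.1 _
    have hB1 : ε ^ (2 * H) * (t - s) ^ (2 * H) ≤ ε ^ (2 * H) * (t - s) ^ m :=
      mul_le_mul_of_nonneg_left i2 hε2H.le
    have hB2 : ε ^ (2 * H + 2) * (t - s) ≤ ε ^ (2 * H) * (t - s) ^ m :=
      mul_le_mul i1 i3 hts0.le hε2H.le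
    have hZ0 : 0 ≤ ε ^ (2 * H) * (t - s) ^ m :=
      mul_nonneg hε2H.le (Real.rpow_nonneg hts0.le _)
    calc (∫ u in Set.Ioc (0:ℝ) 1, (KepsFOU H a ε t u - KepsFOU H a ε s u) ^ 2)
        ≤ 2 * (ε ^ H) ^ 2 * (∫ u in Set.Ioc (0:ℝ) 1, (KH H t u - KH H s u) ^ 2)
          + (4 * (a * ε ^ (H + 1)) ^ 2 * (1 + a ^ 2) * (t - s))
            * ∫ u in Set.Ioc (0:ℝ) 1, F u := by rw [← hsplit]; exact hmono
      _ ≤ 2 * (ε ^ H) ^ 2 * (M * (t - s) ^ (2 * H))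
          + (4 * (a * ε ^ (H + 1)) ^ 2 * (1 + a ^ 2) * (t - s)) * L := by
          rw [hIF]
          refine add_le_add ?_ le_rfl
          exact mul_le_mul_of_nonneg_left hIP (by positivity)
      _ = 2 * M * (ε ^ (2 * H) * (t - s) ^ (2 * H))
          + 4 * a ^ 2 * (1 + a ^ 2) * L * (ε ^ (2 * H + 2) * (t - s)) := by
          rw [← e1, ← e2]; ring
      _ ≤ 2 * M * (ε ^ (2 * H) * (t - s) ^ m)
          + 4 * a ^ 2 * (1 + a ^ 2) * L * (ε ^ (2 * H) * (t - s) ^ m) := by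
          have c1 : 0 ≤ 4 * a ^ 2 * (1 + a ^ 2) * L := mul_nonneg (by positivity) hL0
          exact add_le_add (mul_le_mul_of_nonneg_left hB1 (by positivity))
            (mul_le_mul_of_nonneg_left hB2 c1)
      _ ≤ (2 * M + 4 * a ^ 2 * (1 + a ^ 2) * (L + 1)) * ε ^ (2 * H) * (t - s) ^ m := by
          have c2 : 0 ≤ 4 * a ^ 2 * (1 + a ^ 2) := by positivity
          nlinarith [hZ0, c2]
  intro ε hε s hs t ht
  rcases le_total s t with h | h
  · exact key ε hε s hs t ht h
  · have h2 := key ε hε t ht s hs h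
    rw [show (∫ u in (0:ℝ)..1, (KepsFOU H a ε t u - KepsFOU H a ε s u) ^ 2)
        = ∫ u in (0:ℝ)..1, (KepsFOU H a ε s u - KepsFOU H a ε t u) ^ 2 from
      intervalIntegral.integral_congr fun u _ => by ring, abs_sub_comm t s]
    exact h2
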